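/- Let K be a field and m ≥ 1. In the Lie algebra W = Der_K(K[x_1, …, x_m]) of K-linear derivations of the polynomial ring, call a derivation X homogeneous of degree i (for an integer i ≥ −1) if X(x_j) is homogeneous of degree i+1 for every j, and let W_i be the K-submodule of such derivations (so W_{−1} is spanned by the partial derivatives ∂_1, …, ∂_m). Let h_0 ⊆ W_0 be a Lie subalgebra and let h_1 ⊆ W_1 be a K-submodule satisfying [h_0, h_1] ⊆ h_1 and [∂_j, h_1] ⊆ h_0 for all j. Set h_{−1} = W_{−1} and define recursively for i ≥ 2: h_i = {X ∈ W_i : [∂_j, X] ∈ h_{i−1} for all j}. Then [h_i, h_j] ⊆ h_{i+j} for all i, j ≥ −1 (where h_k := 0 for k < −1); in particular, the sum ⊕_{i ≥ −1} h_i is a Lie subalgebra of W. -/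

import Mathlib

open MvPolynomial

private lemma hom_zero_eq_C {K : Type*} [Field K] {m : ℕ} {p : MvPolynomial (Fin m) K}
    (hp : p.IsHomogeneous 0) : p = C (coeff 0 p) := by
  classical
  have hsub : p.support ⊆ {0} := by
    intro s hs
    have h1 := hp (MvPolynomial.mem_support_iff.mp hs)
    rw [Finset.mem_singleton]
    rw [← Finsupp.degree_eq_zero_iff, Finsupp.degree_eq_weight_one]
    exact h1
  rcases Finset.subset_singleton_iff.mp hsub with h | h
  · have h0 : coeff 0 p = 0 := by
      rw [← MvPolynomial.notMem_support_iff, h]; exact Finset.notMem_empty _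
    have hp0 : p = 0 := MvPolynomial.support_eq_empty.mp h
    rw [hp0]; simp
  · conv_lhs => rw [p.as_sum, h]
    rw [Finset.sum_singleton, monomial_zero']

private lemma deriv_apply_hom {K : Type*} [Field K] {m : ℕ}
    (D : Derivation K (MvPolynomial (Fin m) K) (MvPolynomial (Fin m) K)) {a : ℕ}
    (hD : ∀ k, (D (X k)).IsHomogeneous a)
    {p : MvPolynomial (Fin m) K} {e : ℕ} (hp : p.IsHomogeneous e) :
    (e = 0 → D p = 0) ∧ (∀ d : ℕ, e = d + 1 → (D p).IsHomogeneous (d + a)) := by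
  classical
  have hDeq : D = mkDerivation K (fun k => D (X k)) :=
    derivation_ext fun i => by rw [mkDerivation_X]
  have hadd : ∀ u v : Fin m →₀ ℕ, (u + v).degree = u.degree + v.degree := by
    intro u v; simp only [Finsupp.degree_eq_weight_one, map_add]
  have key : ∀ s ∈ p.support, (e = 0 → D (monomial s (coeff s p)) = 0) ∧
      (∀ d : ℕ, e = d + 1 → (D (monomial s (coeff s p))).IsHomogeneous (d + a)) := by
    intro s hs
    have hdeg : s.degree = e := by
      rw [Finsupp.degree_eq_weight_one]
      exact hp (MvPolynomial.mem_support_iff.mp hs)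
    rw [hDeq, mkDerivation_monomial]
    constructor
    · intro he
      have hs0 : s = 0 := by rwa [he, Finsupp.degree_eq_zero_iff] at hdeg
      subst hs0
      simp [Finsupp.sum_zero_index]
    · intro d hd
      rw [← mem_homogeneousSubmodule]
      apply Submodule.smul_mem
      rw [Finsupp.sum]
      apply Submodule.sum_mem
      intro i hi
      rw [mem_homogeneousSubmodule, smul_eq_mul]
      refine IsHomogeneous.mul (isHomogeneous_monomial _ ?_) (hD i)
      have h1 : Finsupp.single i 1 ≤ s := by
        rw [Finsupp.single_le_iff]
        exact Nat.one_le_iff_ne_zero.mpr (Finsupp.mem_support_iff.mp hi)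
      have h2 : (s - Finsupp.single i 1) + Finsupp.single i 1 = s := tsub_add_cancel_of_le h1
      have h4 : (Finsupp.single i 1).degree = 1 := by
        exact Finsupp.degree_single i 1
      have h3 : s.degree = (s - Finsupp.single i 1).degree + 1 := by
        conv_lhs => rw [← h2]
        rw [hadd, h4]
      omega
  have hsum : D p = ∑ s ∈ p.support, D (monomial s (coeff s p)) := by
    conv_lhs => rw [p.as_sum]
    exact map_sum D _ _
  constructor
  · intro he
    rw [hsum]
    exact Finset.sum_eq_zero fun s hs => (key s hs).1 he
  · intro d hd
    rw [hsum]
    exact IsHomogeneous.sum _ _ _ fun s hs => (key s hs).2 d hd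


/-- The Shchepochkina partial prolong `⊕_{i ≥ -1} h_i` is closed under the Lie bracket of the
Lie algebra `W = Der_K(K[x_1, …, x_m])` of polynomial vector fields.  Here `W i` is the
submodule of derivations homogeneous of degree `i` (sending each variable to a homogeneous
polynomial of degree `i+1`), `h (-1) = W (-1)` (spanned by the partial derivatives),
`h 0 ⊆ W 0` is a Lie subalgebra, `h 1 ⊆ W 1` is a submodule with `[h 0, h 1] ⊆ h 1` and
`[∂_j, h 1] ⊆ h 0`, and for `i ≥ 2` the components are defined recursively by
`h i = {X ∈ W i : [∂_j, X] ∈ h (i-1) for all j}`; `h k = 0` for `k < -1`.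
Then `[h i, h j] ⊆ h (i+j)` for all `i, j ≥ -1`. -/
theorem partial_prolong_bracket (K : Type*) [Field K] (m : ℕ) (hm : 1 ≤ m)
    (W : ℤ → Submodule K (Derivation K (MvPolynomial (Fin m) K) (MvPolynomial (Fin m) K)))
    (hW : ∀ i : ℤ, -1 ≤ i →
      ∀ D : Derivation K (MvPolynomial (Fin m) K) (MvPolynomial (Fin m) K),
        D ∈ W i ↔ ∀ j : Fin m, (D (X j)).IsHomogeneous (i + 1).toNat)
    (h : ℤ → Submodule K (Derivation K (MvPolynomial (Fin m) K) (MvPolynomial (Fin m) K)))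
    (hbot : ∀ k : ℤ, k < -1 → h k = ⊥)
    (hm1 : h (-1) = W (-1))
    (h0W : h 0 ≤ W 0)
    (h0lie : ∀ x ∈ h 0, ∀ y ∈ h 0, ⁅x, y⁆ ∈ h 0)
    (h1W : h 1 ≤ W 1)
    (h01 : ∀ x ∈ h 0, ∀ y ∈ h 1, ⁅x, y⁆ ∈ h 1)
    (hpd1 : ∀ j : Fin m, ∀ y ∈ h 1,
      ⁅(pderiv j : Derivation K (MvPolynomial (Fin m) K) (MvPolynomial (Fin m) K)), y⁆ ∈ h 0)
    (hrec : ∀ i : ℤ, 2 ≤ i →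
      ∀ D : Derivation K (MvPolynomial (Fin m) K) (MvPolynomial (Fin m) K),
        D ∈ h i ↔ D ∈ W i ∧ ∀ j : Fin m,
          ⁅(pderiv j : Derivation K (MvPolynomial (Fin m) K) (MvPolynomial (Fin m) K)), D⁆
            ∈ h (i - 1)) :
    ∀ i j : ℤ, -1 ≤ i → -1 ≤ j → ∀ x ∈ h i, ∀ y ∈ h j, ⁅x, y⁆ ∈ h (i + j) := by
  classical
  have Hmix : ∀ (a b : ℤ), -1 ≤ a → -1 ≤ b →
      ∀ (u v : Derivation K (MvPolynomial (Fin m) K) (MvPolynomial (Fin m) K)),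
      (∀ l, (u (X l)).IsHomogeneous (a + 1).toNat) →
      (∀ l, (v (X l)).IsHomogeneous (b + 1).toNat) →
      ∀ k : Fin m, (u (v (X k))).IsHomogeneous (a + b + 1).toNat := by
    intro a b ha hb u v hu hv k
    have H := deriv_apply_hom u hu (hv k)
    rcases eq_or_lt_of_le hb with hb' | hb'
    · have h0 : ((b : ℤ) + 1).toNat = 0 := by omega
      rw [H.1 h0]
      exact isHomogeneous_zero _ _ _
    · have hd : ((b : ℤ) + 1).toNat = b.toNat + 1 := by omega
      have heq : (a + b + 1).toNat = b.toNat + (a + 1).toNat := by omega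
      rw [heq]
      exact H.2 b.toNat hd
  have hWbr : ∀ (i j : ℤ), -1 ≤ i → -1 ≤ j → -1 ≤ i + j →
      ∀ x ∈ W i, ∀ y ∈ W j, ⁅x, y⁆ ∈ W (i + j) := by
    intro i j hi hj hij x hx y hy
    rw [hW _ hij]
    intro k
    rw [hW _ hi] at hx
    rw [hW _ hj] at hy
    rw [Derivation.commutator_apply]
    refine IsHomogeneous.sub (Hmix i j hi hj x y hx hy k) ?_
    have := Hmix j i hj hi y x hy hx k
    have heq : (j + i + 1).toNat = (i + j + 1).toNat := by omega
    rwa [heq] at this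
  have hpdW : ∀ k : Fin m,
      (pderiv k : Derivation K (MvPolynomial (Fin m) K) (MvPolynomial (Fin m) K)) ∈ W (-1) := by
    intro k
    rw [hW _ le_rfl]
    intro l
    have h0 : ((-1 : ℤ) + 1).toNat = 0 := rfl
    rw [h0, pderiv_X]
    rcases eq_or_ne l k with rfl | hlk
    · rw [Pi.single_eq_same]; exact isHomogeneous_one _ _
    · rw [Pi.single_eq_of_ne hlk]
      exact isHomogeneous_zero _ _ _
  have hsum_apply : ∀ (f : Fin m →
        Derivation K (MvPolynomial (Fin m) K) (MvPolynomial (Fin m) K))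
      (q : MvPolynomial (Fin m) K), (∑ k : Fin m, f k) q = ∑ k : Fin m, f k q := by
    intro f q
    induction (Finset.univ : Finset (Fin m)) using Finset.induction_on with
    | empty => simp
    | insert _ _ hnot ih => simp [Finset.sum_insert hnot, ih]
  have hWm1_eq : ∀ D ∈ W (-1),
      D = ∑ k : Fin m, (coeff 0 (D (X k))) •
        (pderiv k : Derivation K (MvPolynomial (Fin m) K) (MvPolynomial (Fin m) K)) := by
    intro D hD
    rw [hW _ le_rfl] at hD
    have hconst : ∀ k, D (X k) = C (coeff 0 (D (X k))) := by
      intro k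
      have h0 := hD k
      rw [show ((-1 : ℤ) + 1).toNat = 0 from rfl] at h0
      exact hom_zero_eq_C h0
    apply derivation_ext
    intro l
    rw [hconst l, hsum_apply]
    rw [Finset.sum_eq_single l]
    · rw [Derivation.smul_apply, pderiv_X, Pi.single_eq_same, smul_eq_C_mul, mul_one]
    · intro k _ hkl
      rw [Derivation.smul_apply, pderiv_X, Pi.single_eq_of_ne (Ne.symm hkl), smul_zero]
    · intro hl; exact absurd (Finset.mem_univ l) hl
  have hhW : ∀ i : ℤ, -1 ≤ i → h i ≤ W i := by
    intro i hi
    by_cases h2 : 2 ≤ i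
    · intro D hD; exact ((hrec i h2 D).mp hD).1
    · have hi1 : i ≤ 1 := by omega
      interval_cases i
      · rw [hm1]
      · exact h0W
      · exact h1W
  have hpdbr : ∀ (i : ℤ), -1 ≤ i → ∀ k : Fin m, ∀ x ∈ h i,
      ⁅(pderiv k : Derivation K (MvPolynomial (Fin m) K) (MvPolynomial (Fin m) K)), x⁆
        ∈ h (i - 1) := by
    intro i hi k x hx
    by_cases h2 : 2 ≤ i
    · exact ((hrec i h2 x).mp hx).2 k
    · have hi1 : i ≤ 1 := by omega
      interval_cases i
      · rw [hm1] at hx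
        rw [hW _ le_rfl] at hx
        have hconst : ∀ l, x (X l) = C (coeff 0 (x (X l))) := by
          intro l
          have h0 := hx l
          rw [show ((-1 : ℤ) + 1).toNat = 0 from rfl] at h0
          exact hom_zero_eq_C h0
        have hz : ⁅(pderiv k : Derivation K (MvPolynomial (Fin m) K) (MvPolynomial (Fin m) K)),
            x⁆ = 0 := by
          apply derivation_ext
          intro l
          rw [Derivation.commutator_apply, hconst l, pderiv_C]
          rcases eq_or_ne l k with rfl | hlk
          · simp
          · rw [pderiv_X, Pi.single_eq_of_ne hlk]
            simp
        rw [hz, show (-1 : ℤ) - 1 = -2 from rfl, hbot (-2) (by norm_num)]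
        exact Submodule.zero_mem _
      · have := hWbr (-1) 0 le_rfl (by norm_num) (by norm_num)
          (pderiv k) (hpdW k) x (h0W hx)
        rw [show (-1 : ℤ) + 0 = -1 from rfl] at this
        rw [show (0 : ℤ) - 1 = -1 from rfl, hm1]
        exact this
      · rw [show (1 : ℤ) - 1 = 0 from rfl]
        exact hpd1 k x hx
  have hsum_lie : ∀ (f : Fin m →
        Derivation K (MvPolynomial (Fin m) K) (MvPolynomial (Fin m) K))
      (y : Derivation K (MvPolynomial (Fin m) K) (MvPolynomial (Fin m) K)),
      ⁅∑ k : Fin m, f k, y⁆ = ∑ k : Fin m, ⁅f k, y⁆ := by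
    intro f y
    induction (Finset.univ : Finset (Fin m)) using Finset.induction_on with
    | empty => rw [Finset.sum_empty, Finset.sum_empty]; exact zero_lie y
    | @insert a s hnot ih =>
      rw [Finset.sum_insert hnot, Finset.sum_insert hnot, ← ih]
      exact add_lie (f a) (∑ x ∈ s, f x) y
  have hm1br : ∀ D ∈ W (-1), ∀ (j : ℤ), -1 ≤ j → ∀ y ∈ h j, ⁅D, y⁆ ∈ h (j - 1) := by
    intro D hD j hj y hy
    rw [hWm1_eq D hD, hsum_lie]
    apply Submodule.sum_mem
    intro k _
    have hs := smul_lie (coeff 0 (D (X k))) (pderiv k :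
      Derivation K (MvPolynomial (Fin m) K) (MvPolynomial (Fin m) K)) y
    rw [hs]
    exact Submodule.smul_mem _ _ (hpdbr j hj k y hy)
  have Hbase : ∀ i j : ℤ, -1 ≤ i → -1 ≤ j → ¬ 2 ≤ i + j →
      ∀ x ∈ h i, ∀ y ∈ h j, ⁅x, y⁆ ∈ h (i + j) := by
    intro i j hi hj hij x hx y hy
    by_cases hi1 : i = -1
    · subst hi1
      rw [hm1] at hx
      have := hm1br x hx j hj y hy
      rwa [show (-1 : ℤ) + j = j - 1 by ring]
    · by_cases hj1 : j = -1
      · subst hj1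
        rw [hm1] at hy
        have := hm1br y hy i hi x hx
        rw [← lie_skew]
        apply Submodule.neg_mem
        rwa [show i + (-1 : ℤ) = i - 1 by ring]
      · have hi0 : 0 ≤ i := by omega
        have hj0 : 0 ≤ j := by omega
        have hi1' : i ≤ 1 := by omega
        have hj1' : j ≤ 1 := by omega
        interval_cases i <;> interval_cases j
        · exact h0lie x hx y hy
        · exact h01 x hx y hy
        · rw [← lie_skew]
          exact Submodule.neg_mem _ (h01 y hy x hx)
        · omega
  suffices H : ∀ n : ℕ, ∀ i j : ℤ, -1 ≤ i → -1 ≤ j → i + j + 2 ≤ n →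
      ∀ x ∈ h i, ∀ y ∈ h j, ⁅x, y⁆ ∈ h (i + j) by
    intro i j hi hj x hx y hy
    exact H (i + j + 2).toNat i j hi hj (by omega) x hx y hy
  intro n
  induction n with
  | zero =>
    intro i j hi hj hn x hx y hy
    exact Hbase i j hi hj (by omega) x hx y hy
  | succ n IH =>
    intro i j hi hj hn x hx y hy
    by_cases hij : 2 ≤ i + j
    · rw [hrec _ hij]
      refine ⟨hWbr i j hi hj (by omega) x (hhW i hi hx) y (hhW j hj hy), ?_⟩
      intro k
      have hleib := LieRing.leibniz_lie (pderiv k :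
        Derivation K (MvPolynomial (Fin m) K) (MvPolynomial (Fin m) K)) x y
      rw [hleib]
      apply Submodule.add_mem
      · have h1 := hpdbr i hi k x hx
        by_cases hi0 : 0 ≤ i
        · have := IH (i - 1) j (by omega) hj (by omega) _ h1 y hy
          rwa [show i - 1 + j = i + j - 1 by ring] at this
        · rw [hbot (i - 1) (by omega), Submodule.mem_bot] at h1
          rw [h1, show ⁅(0 : Derivation K (MvPolynomial (Fin m) K) (MvPolynomial (Fin m) K)), y⁆ = 0 from zero_lie y]
          exact Submodule.zero_mem _
      · have h1 := hpdbr j hj k y hy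
        by_cases hj0 : 0 ≤ j
        · have := IH i (j - 1) hi (by omega) (by omega) x hx _ h1
          rwa [show i + (j - 1) = i + j - 1 by ring] at this
        · rw [hbot (j - 1) (by omega), Submodule.mem_bot] at h1
          rw [h1, show ⁅x, (0 : Derivation K (MvPolynomial (Fin m) K) (MvPolynomial (Fin m) K))⁆ = 0 from lie_zero x]
          exact Submodule.zero_mem _
    · exact Hbase i j hi hj hij x hx y hy
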